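/- Let C_1 be an a×(a+1) matrix, C_2 an a×(a+2) matrix, D_1 a 3×(a+1) matrix and D_2 a 3×(a+2) matrix over a field, with D_i^{(j)} the j-th row of D_i. Then det of the (2a+3)×(2a+3) block matrix [[C_1, 0],[0, C_2],[D_1, D_2]] equals (-1)^a times ( det([C_1; D_1^{(1)}])·det([C_2; D_2^{(2)}; D_2^{(3)}]) − det([C_1; D_1^{(2)}])·det([C_2; D_2^{(1)}; D_2^{(3)}]) + det([C_1; D_1^{(3)}])·det([C_2; D_2^{(1)}; D_2^{(2)}]) ). -/

import Mathlib

open Matrix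

namespace TwoBlockAux
open Equiv

variable {F : Type*} [Field F] {a : ℕ}
variable (C1 : Matrix (Fin a) (Fin (a+1)) F) (C2 : Matrix (Fin a) (Fin (a+2)) F)

def P (f0 f1 f2 : (Fin (a+1) ⊕ Fin (a+2)) → F) :
    Matrix (Fin (a+1) ⊕ Fin (a+2)) (Fin (a+1) ⊕ Fin (a+2)) F :=
  Matrix.of fun i j =>
    match i with
    | Sum.inl r =>
        if h : (r : ℕ) < a then (match j with
          | Sum.inl c => C1 ⟨r, h⟩ c
          | Sum.inr _ => 0)
        else f0 j
    | Sum.inr r =>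
        if h : (r : ℕ) < a then (match j with
          | Sum.inl _ => 0
          | Sum.inr c => C2 ⟨r, h⟩ c)
        else if (r : ℕ) = a then f1 j else f2 j

def i0 : Fin (a+1) ⊕ Fin (a+2) := Sum.inl ⟨a, by omega⟩
def i1 : Fin (a+1) ⊕ Fin (a+2) := Sum.inr ⟨a, by omega⟩
def i2 : Fin (a+1) ⊕ Fin (a+2) := Sum.inr ⟨a+1, by omega⟩

lemma upd0 (x y f1 f2) : (P C1 C2 x f1 f2).updateRow (i0 (a := a)) y = P C1 C2 y f1 f2 := by
  funext i j
  rcases i with r | r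
  · rcases eq_or_ne (Sum.inl r : Fin (a+1) ⊕ Fin (a+2)) (i0 (a := a)) with h | h
    · rw [h, Matrix.updateRow_self]
      simp [P, i0]
    · rw [Matrix.updateRow_ne h]
      have hr : (r : ℕ) < a := by
        rcases lt_or_ge (r : ℕ) a with h' | h'
        · exact h'
        · exfalso; apply h; simp only [i0]; congr 1
          apply Fin.ext; show (r : ℕ) = a; omega
      simp only [P, Matrix.of_apply, dif_pos hr]
  · rw [Matrix.updateRow_ne (by simp [i0])]
    rfl

lemma upd1 (x y f0 f2) : (P C1 C2 f0 x f2).updateRow (i1 (a := a)) y = P C1 C2 f0 y f2 := by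
  funext i j
  rcases i with r | r
  · rw [Matrix.updateRow_ne (by simp [i1])]; rfl
  · rcases eq_or_ne (Sum.inr r : Fin (a+1) ⊕ Fin (a+2)) (i1 (a := a)) with h | h
    · rw [h, Matrix.updateRow_self]
      simp [P, i1]
    · rw [Matrix.updateRow_ne h]
      have hr : (r : ℕ) ≠ a := fun hc => h (by
        simp only [i1]; congr 1; apply Fin.ext; show (r : ℕ) = a; omega)
      simp only [P, Matrix.of_apply]
      split_ifs <;> simp_all

lemma upd2 (x y f0 f1) : (P C1 C2 f0 f1 x).updateRow (i2 (a := a)) y = P C1 C2 f0 f1 y := by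
  funext i j
  rcases i with r | r
  · rw [Matrix.updateRow_ne (by simp [i2])]; rfl
  · rcases eq_or_ne (Sum.inr r : Fin (a+1) ⊕ Fin (a+2)) (i2 (a := a)) with h | h
    · rw [h, Matrix.updateRow_self]
      simp [P, i2]
    · rw [Matrix.updateRow_ne h]
      have hr : (r : ℕ) ≠ a + 1 := fun hc => h (by
        simp only [i2]; congr 1; apply Fin.ext; show (r : ℕ) = a + 1; omega)
      simp only [P, Matrix.of_apply]
      split_ifs with h1 h2 <;> first | rfl | (exfalso; omega)

lemma det_add0 (x x' f1 f2) : (P C1 C2 (x + x') f1 f2).det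
    = (P C1 C2 x f1 f2).det + (P C1 C2 x' f1 f2).det := by
  rw [← upd0 C1 C2 x (x + x') f1 f2, Matrix.det_updateRow_add, upd0, upd0]

lemma det_add1 (x x' f0 f2) : (P C1 C2 f0 (x + x') f2).det
    = (P C1 C2 f0 x f2).det + (P C1 C2 f0 x' f2).det := by
  rw [← upd1 C1 C2 x (x + x') f0 f2, Matrix.det_updateRow_add, upd1, upd1]

lemma det_add2 (x x' f0 f1) : (P C1 C2 f0 f1 (x + x')).det
    = (P C1 C2 f0 f1 x).det + (P C1 C2 f0 f1 x').det := by
  rw [← upd2 C1 C2 x (x + x') f0 f1, Matrix.det_updateRow_add, upd2, upd2]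

lemma det_swap01 (f0 f1 f2) : (P C1 C2 f0 f1 f2).det = -(P C1 C2 f1 f0 f2).det := by
  have h : P C1 C2 f0 f1 f2
      = (P C1 C2 f1 f0 f2).submatrix (Equiv.swap (i0 (a := a)) (i1 (a := a))) id := by
    funext i j
    simp only [Matrix.submatrix_apply, id]
    rcases eq_or_ne i (i0 (a := a)) with h | h
    · rw [h, Equiv.swap_apply_left]
      simp [P, i0, i1]
    rcases eq_or_ne i (i1 (a := a)) with h' | h'
    · rw [h', Equiv.swap_apply_right]
      simp [P, i0, i1]
    · rw [Equiv.swap_apply_of_ne_of_ne h h']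
      rcases i with r | r
      · have hr : (r : ℕ) < a := by
          rcases lt_or_ge (r : ℕ) a with h'' | h''
          · exact h''
          · exfalso; apply h; simp only [i0]; congr 1
            apply Fin.ext; show (r : ℕ) = a; omega
        simp only [P, Matrix.of_apply, dif_pos hr]
      · have hr : (r : ℕ) ≠ a := fun hc => h' (by
          simp only [i1]; congr 1; apply Fin.ext; show (r : ℕ) = a; omega)
        simp only [P, Matrix.of_apply]
        split_ifs <;> rfl
  rw [h, Matrix.det_permute, Equiv.Perm.sign_swap (by simp [i0, i1])]
  push_cast
  ring

lemma det_swap02 (f0 f1 f2) : (P C1 C2 f0 f1 f2).det = -(P C1 C2 f2 f1 f0).det := by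
  have h : P C1 C2 f0 f1 f2
      = (P C1 C2 f2 f1 f0).submatrix (Equiv.swap (i0 (a := a)) (i2 (a := a))) id := by
    funext i j
    simp only [Matrix.submatrix_apply, id]
    rcases eq_or_ne i (i0 (a := a)) with h | h
    · rw [h, Equiv.swap_apply_left]
      simp [P, i0, i2]
    rcases eq_or_ne i (i2 (a := a)) with h' | h'
    · rw [h', Equiv.swap_apply_right]
      simp [P, i0, i2]
    · rw [Equiv.swap_apply_of_ne_of_ne h h']
      rcases i with r | r
      · have hr : (r : ℕ) < a := by
          rcases lt_or_ge (r : ℕ) a with h'' | h''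
          · exact h''
          · exfalso; apply h; simp only [i0]; congr 1
            apply Fin.ext; show (r : ℕ) = a; omega
        simp only [P, Matrix.of_apply, dif_pos hr]
      · have hr : (r : ℕ) ≠ a + 1 := fun hc => h' (by
          simp only [i2]; congr 1; apply Fin.ext; show (r : ℕ) = a + 1; omega)
        have hlt := r.isLt
        simp only [P, Matrix.of_apply]
        split_ifs with h1 h2 <;> first | rfl | (exfalso; omega)
  rw [h, Matrix.det_permute, Equiv.Perm.sign_swap (by simp [i0, i2])]
  push_cast
  ring

def ce (a : ℕ) : (Fin (a+1) ⊕ Fin (a+2)) ≃ Fin (2*a+3) where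
  toFun := Sum.elim (fun c => ⟨c, by omega⟩) (fun c => ⟨a+1+c, (by have := c.isLt; omega : a+1+(c:ℕ)+1 ≤ 2*a+3)⟩)
  invFun n := if h : (n : ℕ) < a+1 then Sum.inl ⟨n, h⟩
    else Sum.inr ⟨(n : ℕ) - (a+1), by have := n.isLt; omega⟩
  left_inv x := by
    rcases x with c | c
    · simp [c.isLt]
    · have := c.isLt
      rw [Sum.elim_inr]
      dsimp only
      rw [dif_neg (by simp; omega)]
      congr 1
      apply Fin.ext
      show a + 1 + (c : ℕ) - (a+1) = c
      omega
  right_inv n := by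
    dsimp only
    by_cases h : (n : ℕ) < a + 1
    · simp [h]
    · rw [dif_neg h, Sum.elim_inr]
      apply Fin.ext
      show a + 1 + ((n : ℕ) - (a+1)) = (n : ℕ)
      have := n.isLt; omega

def u (a : ℕ) : Equiv.Perm (Fin (a+1) ⊕ Fin (a+2)) where
  toFun x := match x with
    | Sum.inl i => if (i : ℕ) = 0 then Sum.inl ⟨a, by omega⟩
        else Sum.inr ⟨a - i, by have := i.isLt; omega⟩
    | Sum.inr j => if h : (j : ℕ) < a then Sum.inl ⟨j, by omega⟩ else Sum.inr j
  invFun x := match x with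
    | Sum.inl k => if h : (k : ℕ) < a then Sum.inr ⟨k, by omega⟩ else Sum.inl ⟨0, by omega⟩
    | Sum.inr k => if h : (k : ℕ) < a then Sum.inl ⟨a - k, by have := k.isLt; omega⟩
        else Sum.inr k
  left_inv x := by
    rcases x with i | j
    all_goals dsimp only
    · by_cases h : (i : ℕ) = 0
      · rw [if_pos h]
        show (if h : a < a then _ else _) = _
        rw [dif_neg (by omega)]
        congr 1; apply Fin.ext; show (0:ℕ) = i; omega
      · have hi := i.isLt
        rw [if_neg h]
        show (if h : a - (i:ℕ) < a then _ else _) = _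
        rw [dif_pos (by omega)]
        congr 1; apply Fin.ext; show a - (a - (i:ℕ)) = i; omega
    · by_cases h : (j : ℕ) < a
      · rw [dif_pos h]
        show (if h : (j:ℕ) < a then _ else _) = _
        rw [dif_pos h]
      · simp [h]
  right_inv x := by
    rcases x with k | k
    all_goals dsimp only
    · by_cases h : (k : ℕ) < a
      · rw [dif_pos h]
        show (if h : (k:ℕ) < a then _ else _) = _
        rw [dif_pos h]
      · rw [dif_neg h]
        show (if (0:ℕ) = 0 then _ else _) = _
        rw [if_pos rfl]
        congr 1; apply Fin.ext; show a = (k : ℕ); have := k.isLt; omega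
    · by_cases h : (k : ℕ) < a
      · rw [dif_pos h]
        have hk := k.isLt
        show (if a - (k:ℕ) = 0 then _ else _) = _
        rw [if_neg (by omega : ¬ a - (k:ℕ) = 0)]
        congr 1; apply Fin.ext; show a - (a - (k:ℕ)) = k; omega
      · simp [h]

def σp (a : ℕ) : Equiv.Perm (Fin (a+1) ⊕ Fin (a+2)) :=
  (u a) * (Equiv.sumCongr (finRotate (a+1)) (Equiv.refl (Fin (a+2)))) * (u a)⁻¹

lemma sign_σp : Equiv.Perm.sign (σp a) = (-1) ^ a := by
  unfold σp
  rw [_root_.map_mul, _root_.map_mul]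
  rw [Equiv.Perm.sign_sumCongr, sign_finRotate, Nat.add_sub_cancel, Equiv.Perm.sign_refl, mul_one,
    Equiv.Perm.sign_inv, mul_comm (Equiv.Perm.sign (u a)) ((-1)^a : ℤˣ), mul_assoc,
    Int.units_mul_self, mul_one]

variable (a) in
def σc : Equiv.Perm (Fin (a+1) ⊕ Fin (a+2)) :=
  (u a) * (Equiv.sumCongr (finRotate (a+1)) (Equiv.refl (Fin (a+2)))) * (u a)⁻¹

lemma sign_σc : Equiv.Perm.sign (σc a) = (-1) ^ a := sign_σp

lemma v1 (r : Fin (a+1)) (h : (r:ℕ) < a) : ((ce a (σc a (Sum.inl r)) : Fin (2*a+3)) : ℕ) = r := by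
  show ((ce a ((u a) ((Equiv.sumCongr (finRotate (a+1)) (Equiv.refl (Fin (a+2)))) ((u a)⁻¹ (Sum.inl r))))) : ℕ) = r
  rw [Equiv.Perm.inv_def]
  have h1 : (u a).symm (Sum.inl r) = Sum.inr ⟨(r:ℕ), by omega⟩ := by
    show (if h : (r:ℕ) < a then _ else _) = _
    rw [dif_pos h]
  rw [h1, Equiv.sumCongr_apply, Sum.map_inr, Equiv.refl_apply]
  have h2 : (u a) (Sum.inr ⟨(r:ℕ), by omega⟩) = Sum.inl ⟨(r:ℕ), by omega⟩ := by
    show (if h : ((⟨(r:ℕ), by omega⟩ : Fin (a+2)) : ℕ) < a then _ else _) = _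
    rw [dif_pos h]
  rw [h2]
  rfl

lemma v2 (r : Fin (a+1)) (h : ¬ (r:ℕ) < a) :
    ((ce a (σc a (Sum.inl r)) : Fin (2*a+3)) : ℕ) = 2*a := by
  show ((ce a ((u a) ((Equiv.sumCongr (finRotate (a+1)) (Equiv.refl (Fin (a+2)))) ((u a)⁻¹ (Sum.inl r))))) : ℕ) = 2*a
  rw [Equiv.Perm.inv_def]
  have h1 : (u a).symm (Sum.inl r) = Sum.inl ⟨0, by omega⟩ := by
    show (if h : (r:ℕ) < a then _ else _) = _
    rw [dif_neg h]
  rw [h1, Equiv.sumCongr_apply, Sum.map_inl, finRotate_succ_apply]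
  rcases Nat.eq_zero_or_pos a with ha | ha
  · subst ha
    rfl
  · have hv : (((⟨0, by omega⟩ : Fin (a+1)) + 1 : Fin (a+1)) : ℕ) = 1 := by
      simp [Fin.add_def, Nat.mod_eq_of_lt (by omega : 1 < a + 1)]
    have h2 : (u a) (Sum.inl ((⟨0, by omega⟩ : Fin (a+1)) + 1)) = Sum.inr ⟨a - 1, by omega⟩ := by
      simp only [u, Equiv.coe_fn_mk]
      rw [if_neg (by rw [hv]; omega)]
      congr 1
      apply Fin.ext
      show a - (((⟨0, by omega⟩ : Fin (a+1)) + 1 : Fin (a+1)) : ℕ) = a - 1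
      rw [hv]
    rw [h2]
    show a + 1 + (a - 1) = 2 * a
    omega

lemma v3 (r : Fin (a+2)) (h : (r:ℕ) < a) :
    ((ce a (σc a (Sum.inr r)) : Fin (2*a+3)) : ℕ) = a + r := by
  show ((ce a ((u a) ((Equiv.sumCongr (finRotate (a+1)) (Equiv.refl (Fin (a+2)))) ((u a)⁻¹ (Sum.inr r))))) : ℕ) = a + r
  rw [Equiv.Perm.inv_def]
  have h1 : (u a).symm (Sum.inr r) = Sum.inl ⟨a - (r:ℕ), by omega⟩ := by
    show (if h : (r:ℕ) < a then _ else _) = _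
    rw [dif_pos h]
  rw [h1, Equiv.sumCongr_apply, Sum.map_inl, finRotate_succ_apply]
  by_cases hr0 : (r:ℕ) = 0
  · have hv : (((⟨a - (r:ℕ), by omega⟩ : Fin (a+1)) + 1 : Fin (a+1)) : ℕ) = 0 := by
      simp [Fin.add_def, hr0]
    have h2 : (u a) (Sum.inl ((⟨a - (r:ℕ), by omega⟩ : Fin (a+1)) + 1)) = Sum.inl ⟨a, by omega⟩ := by
      simp only [u, Equiv.coe_fn_mk]
      rw [if_pos hv]
    rw [h2]
    show a = a + (r:ℕ)
    omega
  · have hv : (((⟨a - (r:ℕ), by omega⟩ : Fin (a+1)) + 1 : Fin (a+1)) : ℕ) = a - (r:ℕ) + 1 := by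
      simp [Fin.add_def, Nat.mod_eq_of_lt (by omega : a - (r:ℕ) + 1 < a + 1)]
    have h2 : (u a) (Sum.inl ((⟨a - (r:ℕ), by omega⟩ : Fin (a+1)) + 1))
        = Sum.inr ⟨a - (a - (r:ℕ) + 1), by omega⟩ := by
      simp only [u, Equiv.coe_fn_mk]
      rw [if_neg (by rw [hv]; omega)]
      congr 1
      apply Fin.ext
      show a - (((⟨a - (r:ℕ), by omega⟩ : Fin (a+1)) + 1 : Fin (a+1)) : ℕ) = a - (a - (r:ℕ) + 1)
      rw [hv]
    rw [h2]
    show a + 1 + (a - (a - (r:ℕ) + 1)) = a + (r:ℕ)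
    omega

lemma v4 (r : Fin (a+2)) (h : ¬ (r:ℕ) < a) :
    ((ce a (σc a (Sum.inr r)) : Fin (2*a+3)) : ℕ) = a + 1 + r := by
  show ((ce a ((u a) ((Equiv.sumCongr (finRotate (a+1)) (Equiv.refl (Fin (a+2)))) ((u a)⁻¹ (Sum.inr r))))) : ℕ) = a + 1 + r
  rw [Equiv.Perm.inv_def]
  have h1 : (u a).symm (Sum.inr r) = Sum.inr r := by
    show (if h : (r:ℕ) < a then _ else _) = _
    rw [dif_neg h]
  rw [h1, Equiv.sumCongr_apply, Sum.map_inr, Equiv.refl_apply]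
  have h2 : (u a) (Sum.inr r) = Sum.inr r := by
    show (if h : (r:ℕ) < a then _ else _) = _
    rw [dif_neg h]
  rw [h2]
  rfl

def AA (l : Fin (a+1) → F) : Matrix (Fin (a+1)) (Fin (a+1)) F :=
  Matrix.of fun r c => if h : (r : ℕ) < a then C1 ⟨r, h⟩ c else l c

def DD (g1 g2 : Fin (a+2) → F) : Matrix (Fin (a+2)) (Fin (a+2)) F :=
  Matrix.of fun r c => if h : (r : ℕ) < a then C2 ⟨r, h⟩ c
    else if (r : ℕ) = a then g1 c else g2 c

lemma det_P_left (l : Fin (a+1) → F) (f1 f2 : (Fin (a+1) ⊕ Fin (a+2)) → F) :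
    (P C1 C2 (Sum.elim l 0) f1 f2).det
      = (AA C1 l).det * (DD C2 (fun c => f1 (Sum.inr c)) (fun c => f2 (Sum.inr c))).det := by
  rw [show P C1 C2 (Sum.elim l 0) f1 f2
      = fromBlocks (AA C1 l) 0
          (Matrix.of fun (r : Fin (a+2)) (c : Fin (a+1)) =>
            if (r : ℕ) < a then 0 else if (r : ℕ) = a then f1 (Sum.inl c) else f2 (Sum.inl c))
          (DD C2 (fun c => f1 (Sum.inr c)) (fun c => f2 (Sum.inr c))) from ?_,
    det_fromBlocks_zero₁₂]
  funext i j
  rcases i with r | r <;> rcases j with c | c <;>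
    simp only [P, AA, DD, fromBlocks, Matrix.of_apply, Sum.elim_inl, Sum.elim_inr,
      Matrix.zero_apply, Pi.zero_apply] <;> split_ifs <;> rfl

lemma det_P_right (f0 : (Fin (a+1) ⊕ Fin (a+2)) → F) (g1 g2 : Fin (a+2) → F) :
    (P C1 C2 f0 (Sum.elim 0 g1) (Sum.elim 0 g2)).det
      = (AA C1 (fun c => f0 (Sum.inl c))).det * (DD C2 g1 g2).det := by
  rw [show P C1 C2 f0 (Sum.elim 0 g1) (Sum.elim 0 g2)
      = fromBlocks (AA C1 (fun c => f0 (Sum.inl c)))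
          (Matrix.of fun (r : Fin (a+1)) (c : Fin (a+2)) =>
            if (r : ℕ) < a then 0 else f0 (Sum.inr c))
          0 (DD C2 g1 g2) from ?_,
    det_fromBlocks_zero₂₁]
  funext i j
  rcases i with r | r <;> rcases j with c | c <;>
    simp only [P, AA, DD, fromBlocks, Matrix.of_apply, Sum.elim_inl, Sum.elim_inr,
      Matrix.zero_apply, Pi.zero_apply] <;> split_ifs <;> rfl

lemma detAA_zero (l : Fin (a+1) → F) (hl : ∀ c, l c = 0) : (AA C1 l).det = 0 :=
  Matrix.det_eq_zero_of_row_eq_zero ⟨a, by omega⟩ (fun c => by simp [AA, hl])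

lemma detDD_zero1 (g1 g2 : Fin (a+2) → F) (hg : ∀ c, g1 c = 0) : (DD C2 g1 g2).det = 0 :=
  Matrix.det_eq_zero_of_row_eq_zero ⟨a, by omega⟩ (fun c => by simp [DD, hg])

lemma detDD_zero2 (g1 g2 : Fin (a+2) → F) (hg : ∀ c, g2 c = 0) : (DD C2 g1 g2).det = 0 :=
  Matrix.det_eq_zero_of_row_eq_zero ⟨a+1, by omega⟩ (fun c => by
    have h1 : ¬ ((⟨a+1, by omega⟩ : Fin (a+2)) : ℕ) < a := by simp
    have h2 : ¬ ((⟨a+1, by omega⟩ : Fin (a+2)) : ℕ) = a := by simp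
    simp only [DD, Matrix.of_apply, dif_neg h1, if_neg h2, hg])

lemma detDD_swap (g1 g2 : Fin (a+2) → F) : (DD C2 g1 g2).det = -(DD C2 g2 g1).det := by
  have h : DD C2 g1 g2 = (DD C2 g2 g1).submatrix
      (Equiv.swap (⟨a, by omega⟩ : Fin (a+2)) ⟨a+1, by omega⟩) id := by
    funext r c
    simp only [Matrix.submatrix_apply, id]
    by_cases h1 : (r : ℕ) < a
    · rw [Equiv.swap_apply_of_ne_of_ne (Fin.ne_of_val_ne (show (r:ℕ) ≠ a by omega))
        (Fin.ne_of_val_ne (show (r:ℕ) ≠ a+1 by omega))]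
      simp only [DD, Matrix.of_apply, dif_pos h1]
    by_cases h2 : (r : ℕ) = a
    · rw [show r = (⟨a, by omega⟩ : Fin (a+2)) from Fin.ext h2, Equiv.swap_apply_left]
      show (if h : a < a then _ else if a = a then g1 c else g2 c)
        = (if h : a + 1 < a then _ else if a + 1 = a then g2 c else g1 c)
      rw [dif_neg (by omega : ¬ a < a), dif_neg (by omega : ¬ a + 1 < a),
        if_pos rfl, if_neg (by omega : ¬ a + 1 = a)]
    · have h3 : (r : ℕ) = a + 1 := by have := r.isLt; omega
      rw [show r = (⟨a+1, by omega⟩ : Fin (a+2)) from Fin.ext h3, Equiv.swap_apply_right]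
      show (if h : a + 1 < a then _ else if a + 1 = a then g1 c else g2 c)
        = (if h : a < a then _ else if a = a then g2 c else g1 c)
      rw [dif_neg (by omega : ¬ a < a), dif_neg (by omega : ¬ a + 1 < a),
        if_pos rfl, if_neg (by omega : ¬ a + 1 = a)]
  rw [h, Matrix.det_permute, Equiv.Perm.sign_swap (Fin.ne_of_val_ne (show a ≠ a + 1 by omega))]
  push_cast
  ring

variable (D1 : Matrix (Fin 3) (Fin (a+1)) F) (D2 : Matrix (Fin 3) (Fin (a+2)) F)

lemma det_M :
    (P C1 C2 (Sum.elim (D1 0) (D2 0)) (Sum.elim (D1 1) (D2 1)) (Sum.elim (D1 2) (D2 2))).det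
    = (AA C1 (D1 0)).det * (DD C2 (D2 1) (D2 2)).det
      - (AA C1 (D1 1)).det * (DD C2 (D2 0) (D2 2)).det
      + (AA C1 (D1 2)).det * (DD C2 (D2 0) (D2 1)).det := by
  have hsplit : ∀ (l : Fin (a+1) → F) (r : Fin (a+2) → F),
      (Sum.elim l r : (Fin (a+1) ⊕ Fin (a+2)) → F)
        = Sum.elim l (0 : Fin (a+2) → F) + Sum.elim (0 : Fin (a+1) → F) r := by
    intro l r; funext x; rcases x with x | x <;> simp
  rw [hsplit (D1 0) (D2 0), hsplit (D1 1) (D2 1), hsplit (D1 2) (D2 2)]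
  simp only [det_add0, det_add1, det_add2]
  have t1 : (P C1 C2 (Sum.elim (D1 0) (0 : Fin (a+2) → F))
      (Sum.elim (0 : Fin (a+1) → F) (D2 1)) (Sum.elim (0 : Fin (a+1) → F) (D2 2))).det
      = (AA C1 (D1 0)).det * (DD C2 (D2 1) (D2 2)).det := by
    rw [det_P_left]; rfl
  have t2 : (P C1 C2 (Sum.elim (D1 0) (0 : Fin (a+2) → F))
      (Sum.elim (0 : Fin (a+1) → F) (D2 1)) (Sum.elim (D1 2) (0 : Fin (a+2) → F))).det = 0 := by
    rw [det_P_left]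
    show (AA C1 (D1 0)).det * (DD C2 (D2 1) (fun _ => (0:F))).det = 0
    rw [detDD_zero2 C2 _ _ (fun _ => rfl), mul_zero]
  have t3 : (P C1 C2 (Sum.elim (D1 0) (0 : Fin (a+2) → F))
      (Sum.elim (D1 1) (0 : Fin (a+2) → F)) (Sum.elim (0 : Fin (a+1) → F) (D2 2))).det = 0 := by
    rw [det_P_left]
    show (AA C1 (D1 0)).det * (DD C2 (fun _ => (0:F)) (D2 2)).det = 0
    rw [detDD_zero1 C2 _ _ (fun _ => rfl), mul_zero]
  have t4 : (P C1 C2 (Sum.elim (D1 0) (0 : Fin (a+2) → F))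
      (Sum.elim (D1 1) (0 : Fin (a+2) → F)) (Sum.elim (D1 2) (0 : Fin (a+2) → F))).det = 0 := by
    rw [det_P_left]
    show (AA C1 (D1 0)).det * (DD C2 (fun _ => (0:F)) (fun _ => (0:F))).det = 0
    rw [detDD_zero1 C2 _ _ (fun _ => rfl), mul_zero]
  have t5 : (P C1 C2 (Sum.elim (0 : Fin (a+1) → F) (D2 0))
      (Sum.elim (0 : Fin (a+1) → F) (D2 1)) (Sum.elim (0 : Fin (a+1) → F) (D2 2))).det = 0 := by
    rw [det_P_right]
    show (AA C1 (fun _ => (0:F))).det * (DD C2 (D2 1) (D2 2)).det = 0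
    rw [detAA_zero C1 _ (fun _ => rfl), zero_mul]
  have t6 : (P C1 C2 (Sum.elim (0 : Fin (a+1) → F) (D2 0))
      (Sum.elim (0 : Fin (a+1) → F) (D2 1)) (Sum.elim (D1 2) (0 : Fin (a+2) → F))).det
      = (AA C1 (D1 2)).det * (DD C2 (D2 0) (D2 1)).det := by
    rw [det_swap02, det_P_left]
    show -((AA C1 (D1 2)).det * (DD C2 (D2 1) (D2 0)).det)
      = (AA C1 (D1 2)).det * (DD C2 (D2 0) (D2 1)).det
    rw [detDD_swap]
    ring
  have t7 : (P C1 C2 (Sum.elim (0 : Fin (a+1) → F) (D2 0))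
      (Sum.elim (D1 1) (0 : Fin (a+2) → F)) (Sum.elim (0 : Fin (a+1) → F) (D2 2))).det
      = -((AA C1 (D1 1)).det * (DD C2 (D2 0) (D2 2)).det) := by
    rw [det_swap01, det_P_left]; rfl
  have t8 : (P C1 C2 (Sum.elim (0 : Fin (a+1) → F) (D2 0))
      (Sum.elim (D1 1) (0 : Fin (a+2) → F)) (Sum.elim (D1 2) (0 : Fin (a+2) → F))).det = 0 := by
    rw [det_swap01, det_P_left]
    show -((AA C1 (D1 1)).det * (DD C2 (D2 0) (fun _ => (0:F))).det) = 0
    rw [detDD_zero2 C2 _ _ (fun _ => rfl), mul_zero, neg_zero]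
  rw [t1, t2, t3, t4, t5, t6, t7, t8]
  ring

end TwoBlockAux


open TwoBlockAux in
/-- **Two-block determinant identity (Lemma 2prod-id).** For `C₁` an `a × (a+1)` matrix,
`C₂` an `a × (a+2)` matrix, `D₁` a `3 × (a+1)` matrix and `D₂` a `3 × (a+2)` matrix over a
field, the determinant of the `(2a+3) × (2a+3)` block matrix `[[C₁,0],[0,C₂],[D₁,D₂]]`
equals `(-1)^a` times
`det[C₁;D₁⁽¹⁾]·det[C₂;D₂⁽²⁾;D₂⁽³⁾] − det[C₁;D₁⁽²⁾]·det[C₂;D₂⁽¹⁾;D₂⁽³⁾]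
  + det[C₁;D₁⁽³⁾]·det[C₂;D₂⁽¹⁾;D₂⁽²⁾]`. -/
theorem det_two_block_with_three_bottom_rows
    (F : Type*) [Field F] (a : ℕ)
    (C1 : Matrix (Fin a) (Fin (a+1)) F) (C2 : Matrix (Fin a) (Fin (a+2)) F)
    (D1 : Matrix (Fin 3) (Fin (a+1)) F) (D2 : Matrix (Fin 3) (Fin (a+2)) F)
    (B : Matrix (Fin (2*a+3)) (Fin (2*a+3)) F)
    (hB11 : ∀ (r : Fin a) (c : Fin (a+1)),
      B ⟨r, by have := r.isLt; omega⟩ ⟨c, by have := c.isLt; omega⟩ = C1 r c)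
    (hB12 : ∀ (r : Fin a) (c : Fin (a+2)),
      B ⟨r, by have := r.isLt; omega⟩ ⟨a+1+c, by have := c.isLt; omega⟩ = 0)
    (hB21 : ∀ (r : Fin a) (c : Fin (a+1)),
      B ⟨a+r, by have := r.isLt; omega⟩ ⟨c, by have := c.isLt; omega⟩ = 0)
    (hB22 : ∀ (r : Fin a) (c : Fin (a+2)),
      B ⟨a+r, by have := r.isLt; omega⟩ ⟨a+1+c, by have := c.isLt; omega⟩ = C2 r c)
    (hB31 : ∀ (j : Fin 3) (c : Fin (a+1)),
      B ⟨2*a+j, by have := j.isLt; omega⟩ ⟨c, by have := c.isLt; omega⟩ = D1 j c)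
    (hB32 : ∀ (j : Fin 3) (c : Fin (a+2)),
      B ⟨2*a+j, by have := j.isLt; omega⟩ ⟨a+1+c, by have := c.isLt; omega⟩ = D2 j c) :
    B.det = (-1 : F) ^ a *
      ((Matrix.of fun (r : Fin (a+1)) (c : Fin (a+1)) =>
          if hr : (r : ℕ) < a then C1 ⟨r, hr⟩ c else D1 0 c).det *
        (Matrix.of fun (r : Fin (a+2)) (c : Fin (a+2)) =>
          if hr : (r : ℕ) < a then C2 ⟨r, hr⟩ c
          else if (r : ℕ) = a then D2 1 c else D2 2 c).det
      - (Matrix.of fun (r : Fin (a+1)) (c : Fin (a+1)) =>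
          if hr : (r : ℕ) < a then C1 ⟨r, hr⟩ c else D1 1 c).det *
        (Matrix.of fun (r : Fin (a+2)) (c : Fin (a+2)) =>
          if hr : (r : ℕ) < a then C2 ⟨r, hr⟩ c
          else if (r : ℕ) = a then D2 0 c else D2 2 c).det
      + (Matrix.of fun (r : Fin (a+1)) (c : Fin (a+1)) =>
          if hr : (r : ℕ) < a then C1 ⟨r, hr⟩ c else D1 2 c).det *
        (Matrix.of fun (r : Fin (a+2)) (c : Fin (a+2)) =>
          if hr : (r : ℕ) < a then C2 ⟨r, hr⟩ c
          else if (r : ℕ) = a then D2 0 c else D2 1 c).det) := by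
  show B.det = (-1 : F) ^ a *
    ((AA C1 (D1 0)).det * (DD C2 (D2 1) (D2 2)).det
     - (AA C1 (D1 1)).det * (DD C2 (D2 0) (D2 2)).det
     + (AA C1 (D1 2)).det * (DD C2 (D2 0) (D2 1)).det)
  have key : ((B.submatrix (ce a) (ce a)).submatrix (σc a) id)
      = P C1 C2 (Sum.elim (D1 0) (D2 0)) (Sum.elim (D1 1) (D2 1)) (Sum.elim (D1 2) (D2 2)) := by
    funext i j
    simp only [Matrix.submatrix_apply, id]
    rcases i with r | r
    · by_cases h : (r : ℕ) < a
      · rw [show ce a (σc a (Sum.inl r)) = (⟨(r:ℕ), by omega⟩ : Fin (2*a+3))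
          from Fin.ext (v1 r h)]
        simp only [P, Matrix.of_apply, dif_pos h]
        rcases j with c | c
        · exact hB11 ⟨(r:ℕ), h⟩ c
        · exact hB12 ⟨(r:ℕ), h⟩ c
      · rw [show ce a (σc a (Sum.inl r)) = (⟨2*a, by omega⟩ : Fin (2*a+3))
          from Fin.ext (v2 r h)]
        simp only [P, Matrix.of_apply, dif_neg h]
        rcases j with c | c
        · simp only [Sum.elim_inl]
          exact hB31 0 c
        · simp only [Sum.elim_inr]
          exact hB32 0 c
    · by_cases h : (r : ℕ) < a
      · rw [show ce a (σc a (Sum.inr r)) = (⟨a + (r:ℕ), by omega⟩ : Fin (2*a+3))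
          from Fin.ext (v3 r h)]
        simp only [P, Matrix.of_apply, dif_pos h]
        rcases j with c | c
        · exact hB21 ⟨(r:ℕ), h⟩ c
        · exact hB22 ⟨(r:ℕ), h⟩ c
      · by_cases hr : (r : ℕ) = a
        · rw [show ce a (σc a (Sum.inr r)) = (⟨2*a+1, by omega⟩ : Fin (2*a+3))
            from Fin.ext (by rw [v4 r h]; show a + 1 + (r:ℕ) = 2*a+1; omega)]
          simp only [P, Matrix.of_apply, dif_neg h, if_pos hr]
          rcases j with c | c
          · simp only [Sum.elim_inl]
            exact hB31 1 c
          · simp only [Sum.elim_inr]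
            exact hB32 1 c
        · have hr2 : (r : ℕ) = a + 1 := by have := r.isLt; omega
          rw [show ce a (σc a (Sum.inr r)) = (⟨2*a+2, by omega⟩ : Fin (2*a+3))
            from Fin.ext (by rw [v4 r h]; show a + 1 + (r:ℕ) = 2*a+2; omega)]
          simp only [P, Matrix.of_apply, dif_neg h, if_neg hr]
          rcases j with c | c
          · simp only [Sum.elim_inl]
            exact hB31 2 c
          · simp only [Sum.elim_inr]
            exact hB32 2 c
  have hdet := Matrix.det_permute (σc a) (B.submatrix (ce a) (ce a))
  rw [key, Matrix.det_submatrix_equiv_self, sign_σc, det_M C1 C2 D1 D2] at hdet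
  have hcast : ((((-1 : ℤˣ)^a : ℤˣ) : ℤ) : F) = (-1 : F)^a := by push_cast; ring
  rw [hcast] at hdet
  rw [hdet, ← mul_assoc]
  rw [show (-1:F)^a * (-1:F)^a = 1 by rw [← pow_add, Even.neg_one_pow ⟨a, rfl⟩], one_mul]
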